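/- Let k ≥ 1 be a natural number, let ε ∈ (0,1) and c ∈ (0,1) be reals, and let x : Fin k → ℝ satisfy 0 ≤ x i ≤ 1 for all i and ∑_{i} x i ≤ (1−ε)·k. Then there exists a subset I ⊆ Fin k with |I| = ⌊c·k⌋ such that x i ≤ (1−ε)/(1−c) for all i ∈ I. -/

import Mathlib

/-- **Existence of the index set ℐ.** Let `k ≥ 1`, `ε, c ∈ (0,1)`, and `x : Fin k → ℝ`
with `0 ≤ x i ≤ 1` for all `i` and `∑ i, x i ≤ (1-ε)·k`. Then there is a subset
`I ⊆ Fin k` with `|I| = ⌊c·k⌋` such that `x i ≤ (1-ε)/(1-c)` for all `i ∈ I`. -/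
theorem exists_index_set (k : ℕ) (hk : 1 ≤ k) (ε c : ℝ)
    (hε : ε ∈ Set.Ioo (0 : ℝ) 1) (hc : c ∈ Set.Ioo (0 : ℝ) 1)
    (x : Fin k → ℝ) (hx : ∀ i, 0 ≤ x i ∧ x i ≤ 1)
    (hsum : ∑ i, x i ≤ (1 - ε) * k) :
    ∃ I : Finset (Fin k), I.card = ⌊c * (k : ℝ)⌋₊ ∧ ∀ i ∈ I, x i ≤ (1 - ε) / (1 - c) := by
  obtain ⟨hε0, hε1⟩ := hε
  obtain ⟨hc0, hc1⟩ := hc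
  set t : ℝ := (1 - ε) / (1 - c) with ht
  have h1c : (0:ℝ) < 1 - c := by linarith
  have htpos : 0 < t := div_pos (by linarith) h1c
  set S : Finset (Fin k) := Finset.univ.filter (fun i => x i ≤ t) with hS
  set B : Finset (Fin k) := Finset.univ.filter (fun i => ¬ x i ≤ t) with hB
  have hBsum : (B.card : ℝ) * t ≤ ∑ i, x i := by
    calc (B.card : ℝ) * t = ∑ _i ∈ B, t := by rw [Finset.sum_const, nsmul_eq_mul]
    _ ≤ ∑ i ∈ B, x i := Finset.sum_le_sum (fun i hi =>
        le_of_lt (not_le.mp (Finset.mem_filter.mp hi).2))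
    _ ≤ ∑ i, x i := Finset.sum_le_sum_of_subset_of_nonneg (Finset.subset_univ B)
        (fun i _ _ => (hx i).1)
  have hBle : (B.card : ℝ) ≤ (1 - c) * k := by
    have h1 : (B.card : ℝ) * t ≤ (1 - ε) * k := le_trans hBsum hsum
    have h2 : (B.card : ℝ) * t ≤ ((1 - c) * k) * t := by
      have : ((1 - c) * k) * t = (1 - ε) * k := by
        rw [ht]; field_simp
      linarith
    exact le_of_mul_le_mul_right h2 htpos
  have hSB : S.card + B.card = k := by
    rw [hS, hB, Finset.card_filter_add_card_filter_not, Finset.card_univ,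
      Fintype.card_fin]
  have hfloor : ⌊c * (k : ℝ)⌋₊ ≤ S.card := by
    have hck : c * (k : ℝ) ≤ (S.card : ℝ) := by
      have : (S.card : ℝ) = (k : ℝ) - B.card := by
        have := hSB
        push_cast [← this]
        ring
      linarith
    exact Nat.le_of_lt_succ (Nat.lt_succ_of_le (Nat.floor_le_of_le hck |>.trans
      (by simp [Nat.floor_natCast])))
  obtain ⟨I, hIS, hIcard⟩ := Finset.exists_subset_card_eq (s := S) hfloor
  exact ⟨I, hIcard, fun i hi => (Finset.mem_filter.mp (hIS hi)).2⟩
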